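/- Let G₁ and G₂ be groups such that the product group G₁ × G₂ acts freely on a set X (identify G₁ and G₂ with the subgroups G₁ × {1} and {1} × G₂). Then the map X → (X/G₁) × (X/G₂) sending x to the pair of orbits ([x]_{G₁}, [x]_{G₂}) is injective, and its image is exactly the fiber product (X/G₁) ×_{X/(G₁×G₂)} (X/G₂), i.e. the set of pairs of orbits ([u]_{G₁}, [v]_{G₂}) such that u and v lie in the same G₁×G₂-orbit. -/

import Mathlib

/-- Let `G₁`, `G₂` be groups such that the product group `G₁ × G₂` acts freely on a set `X`
(we identify `G₁`, `G₂` with the subgroups `G₁ × {1}` and `{1} × G₂`, acting on `X` via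
the inclusions `MonoidHom.inl`, `MonoidHom.inr`).  Then the map
`X → (X/G₁) × (X/G₂)`, `x ↦ ([x]_{G₁}, [x]_{G₂})`, is injective, and its image is exactly
the fiber product `(X/G₁) ×_{X/(G₁×G₂)} (X/G₂)`: the set of pairs of orbits
`([u]_{G₁}, [v]_{G₂})` such that `u` and `v` lie in the same `G₁ × G₂`-orbit. -/
theorem free_product_action_fiber_product
    {G₁ G₂ X : Type*} [Group G₁] [Group G₂] [MulAction (G₁ × G₂) X]
    (hfree : ∀ (g : G₁ × G₂) (x : X), g • x = x → g = 1) :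
    letI a₁ : MulAction G₁ X := MulAction.compHom X (MonoidHom.inl G₁ G₂)
    letI a₂ : MulAction G₂ X := MulAction.compHom X (MonoidHom.inr G₁ G₂)
    Function.Injective
      (fun x : X => (Quotient.mk (MulAction.orbitRel G₁ X) x,
                     Quotient.mk (MulAction.orbitRel G₂ X) x)) ∧
    Set.range
      (fun x : X => (Quotient.mk (MulAction.orbitRel G₁ X) x,
                     Quotient.mk (MulAction.orbitRel G₂ X) x)) =
      {p : Quotient (MulAction.orbitRel G₁ X) × Quotient (MulAction.orbitRel G₂ X) |
        ∃ u v : X, Quotient.mk (MulAction.orbitRel G₁ X) u = p.1 ∧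
          Quotient.mk (MulAction.orbitRel G₂ X) v = p.2 ∧
          ∃ g : G₁ × G₂, g • u = v} := by

  letI a₁ : MulAction G₁ X := MulAction.compHom X (MonoidHom.inl G₁ G₂)
  letI a₂ : MulAction G₂ X := MulAction.compHom X (MonoidHom.inr G₁ G₂)
  have key : ∀ x y : X,
      Quotient.mk (MulAction.orbitRel G₁ X) x = Quotient.mk (MulAction.orbitRel G₁ X) y ↔
      ∃ g : G₁, ((g, 1) : G₁ × G₂) • y = x := by
    intro x y
    rw [Quotient.eq]
    exact Iff.rfl
  have key2 : ∀ x y : X,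
      Quotient.mk (MulAction.orbitRel G₂ X) x = Quotient.mk (MulAction.orbitRel G₂ X) y ↔
      ∃ g : G₂, ((1, g) : G₁ × G₂) • y = x := by
    intro x y
    rw [Quotient.eq]
    exact Iff.rfl
  constructor
  · intro x y hxy
    obtain ⟨h1, h2⟩ := Prod.mk.injEq .. ▸ hxy
    obtain ⟨g₁, hg₁⟩ := (key x y).1 h1
    obtain ⟨g₂, hg₂⟩ := (key2 x y).1 h2
    have : (((g₁, 1) : G₁ × G₂)⁻¹ * (1, g₂)) • y = y := by
      rw [mul_smul, hg₂, inv_smul_eq_iff, hg₁]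
    have := hfree _ _ this
    rw [Prod.ext_iff] at this
    simp at this
    rw [← hg₁, this.1]
    exact one_smul _ _
  · ext p
    constructor
    · rintro ⟨x, rfl⟩
      exact ⟨x, x, rfl, rfl, 1, one_smul _ _⟩
    · rintro ⟨u, v, h1, h2, ⟨g₁, g₂⟩, hg⟩
      refine ⟨((g₁, 1) : G₁ × G₂) • u, ?_⟩
      have e1 : Quotient.mk (MulAction.orbitRel G₁ X) (((g₁, 1) : G₁ × G₂) • u)
          = Quotient.mk (MulAction.orbitRel G₁ X) u := (key _ u).2 ⟨g₁, rfl⟩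
      have e2 : Quotient.mk (MulAction.orbitRel G₂ X) (((g₁, 1) : G₁ × G₂) • u)
          = Quotient.mk (MulAction.orbitRel G₂ X) v := by
        refine ((key2 v _).2 ⟨g₂, ?_⟩).symm
        rw [← hg, ← mul_smul]
        congr 1
        simp [Prod.ext_iff]
      simp only [Prod.ext_iff]
      exact ⟨e1.trans h1, e2.trans h2⟩
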